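/- Let θ : F(a,b) → F(a,b) be the endomorphism of the free group on two generators determined by θ(a) = ab and θ(b) = ba. If w ∈ F(a,b) with w ≠ 1 and i, j are positive integers such that θⁱ(w) is conjugate in F(a,b) to wʲ, then j = 2ⁱ. -/

import Mathlib

open FreeGroup List

/-- The endomorphism `θ` of the free group `F(a,b)` (with `a = of true`, `b = of false`)
determined by `θ(a) = ab` and `θ(b) = ba`. -/
def θ : FreeGroup Bool →* FreeGroup Bool :=
  FreeGroup.lift fun x : Bool =>
    if x then FreeGroup.of true * FreeGroup.of false
    else FreeGroup.of false * FreeGroup.of true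


abbrev NR (p q : Bool × Bool) : Prop := ¬(p.1 = q.1 ∧ p.2 = !q.2)
abbrev IsRed (L : List (Bool × Bool)) : Prop := L.IsChain NR

theorem isRed_reduce (L : List (Bool × Bool)) : IsRed (FreeGroup.reduce L) := by
  induction L with
  | nil => simp [IsRed]
  | cons x L ih =>
    rw [FreeGroup.reduce.cons]
    rcases h : FreeGroup.reduce L with _ | ⟨hd, tl⟩
    · simp [IsRed]
    · rw [h] at ih
      by_cases hc : x.1 = hd.1 ∧ x.2 = !hd.2
      · simpa [hc] using ih.tail
      · simp only [List.casesOn, if_neg hc]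
        exact List.isChain_cons_cons.2 ⟨hc, ih⟩

theorem reduce_eq_self (L : List (Bool × Bool)) (h : IsRed L) : FreeGroup.reduce L = L := by
  induction L with
  | nil => rfl
  | cons x L ih =>
    rw [FreeGroup.reduce.cons, ih h.tail]
    rcases hL : L with _ | ⟨hd, tl⟩
    · rfl
    · rw [hL] at h
      have := List.isChain_cons_cons.1 h
      simp [this.1]

theorem isRed_toWord (x : FreeGroup Bool) : IsRed (toWord x) := by
  have := isRed_reduce (toWord x)
  rwa [FreeGroup.reduce_toWord] at this

theorem toWord_mk_of_isRed {L : List (Bool × Bool)} (h : IsRed L) :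
    toWord (FreeGroup.mk L) = L := by
  rw [FreeGroup.toWord_mk, reduce_eq_self L h]


/-- the word-level substitution -/
def sub (p : Bool × Bool) : List (Bool × Bool) :=
  if p.2 then [(p.1, true), (!p.1, true)] else [(!p.1, false), (p.1, false)]

theorem θ_of (x : Bool) : θ (FreeGroup.of x) = FreeGroup.of x * FreeGroup.of (!x) := by
  cases x <;> simp [θ]

theorem θ_mk (L : List (Bool × Bool)) : θ (FreeGroup.mk L) = FreeGroup.mk (L.flatMap sub) := by
  induction L with
  | nil =>
    show θ 1 = _
    rw [_root_.map_one]; rfl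
  | cons p L ih =>
    have h1 : FreeGroup.mk (p :: L) = FreeGroup.mk [p] * FreeGroup.mk L := by
      rw [FreeGroup.mul_mk]; rfl
    rw [h1, _root_.map_mul, ih, List.flatMap_cons, ← FreeGroup.mul_mk]
    congr 1
    rcases p with ⟨x, s⟩
    cases s
    · have h2 : FreeGroup.mk [(x, false)] = (FreeGroup.of x)⁻¹ := by
        rw [FreeGroup.of, FreeGroup.inv_mk]; rfl
      rw [h2, _root_.map_inv, θ_of, mul_inv_rev, sub]
      simp only [if_neg Bool.false_ne_true]
      rw [show ((FreeGroup.of (!x))⁻¹ : FreeGroup Bool) = FreeGroup.mk [(!x, false)] by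
        rw [FreeGroup.of, FreeGroup.inv_mk]; rfl,
        show ((FreeGroup.of x)⁻¹ : FreeGroup Bool) = FreeGroup.mk [(x, false)] by
        rw [FreeGroup.of, FreeGroup.inv_mk]; rfl, FreeGroup.mul_mk]
      rfl
    · rw [show FreeGroup.mk [(x, true)] = FreeGroup.of x from rfl, θ_of, sub]
      simp only [if_pos rfl]
      rw [FreeGroup.of, FreeGroup.of, FreeGroup.mul_mk]
      rfl

theorem isRed_flatMap_sub {L : List (Bool × Bool)} (h : IsRed L) : IsRed (L.flatMap sub) := by
  have hnil : [] ∉ L.map sub := by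
    intro hmem
    rcases List.mem_map.1 hmem with ⟨p, _, hp⟩
    rcases p with ⟨a, s⟩; cases s <;> simp [sub] at hp
  rw [List.flatMap]
  refine (List.isChain_flatten hnil).2 ⟨?_, ?_⟩
  · intro l hl
    rcases List.mem_map.1 hl with ⟨p, _, rfl⟩
    rcases p with ⟨a, s⟩; cases a <;> cases s <;> simp [sub, NR]
  · rw [List.isChain_map]
    refine h.imp ?_
    rintro ⟨a, s⟩ ⟨b, t⟩ hpq
    cases a <;> cases s <;> cases b <;> cases t <;> revert hpq <;> simp [sub, NR]

theorem norm_θ (x : FreeGroup Bool) : norm (θ x) = 2 * norm x := by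
  conv_lhs => rw [← FreeGroup.mk_toWord (x := x)]
  rw [θ_mk, FreeGroup.norm, toWord_mk_of_isRed (isRed_flatMap_sub (isRed_toWord x))]
  rw [List.length_flatMap]
  rw [FreeGroup.norm]
  induction (toWord x) with
  | nil => rfl
  | cons p L ih =>
    rcases p with ⟨a, s⟩
    rw [List.map_cons, List.sum_cons, ih]
    cases s <;> simp [sub] <;> ring


/-- cyclically reduced word -/
def CycRed (L : List (Bool × Bool)) : Prop :=
  IsRed L ∧ ∀ p ∈ L.getLast?, ∀ q ∈ L.head?, NR p q

theorem norm_pow_of_cycRed {L : List (Bool × Bool)} (hL : L ≠ []) (h : CycRed L) (n : ℕ) :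
    norm (FreeGroup.mk L ^ n) = n * L.length := by
  have hrep : ∀ m : ℕ, FreeGroup.mk L ^ m = FreeGroup.mk (List.replicate m L).flatten := by
    intro m
    induction m with
    | zero => simp [FreeGroup.one_eq_mk]
    | succ m ih =>
      rw [pow_succ', ih, FreeGroup.mul_mk, List.replicate_succ, List.flatten_cons]
  have hred : IsRed (List.replicate n L).flatten := by
    have hnil : [] ∉ List.replicate n L := by
      intro hm
      exact hL (List.eq_of_mem_replicate hm).symm
    refine (List.isChain_flatten hnil).2 ⟨?_, ?_⟩
    · intro l hl
      rw [List.eq_of_mem_replicate hl]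
      exact h.1
    · refine List.isChain_replicate_of_rel n ?_
      exact h.2
  rw [hrep n, FreeGroup.norm, toWord_mk_of_isRed hred, List.length_flatten]
  simp [List.map_replicate, Nat.mul_comm]

theorem cyclic_reduction (w : FreeGroup Bool) (hw : w ≠ 1) :
    ∃ (g u : FreeGroup Bool), w = g * u * g⁻¹ ∧ u ≠ 1 ∧ CycRed (toWord u) := by
  generalize hn : norm w = N
  induction N using Nat.strong_induction_on generalizing w with
  | _ N ih =>
  by_cases hcyc : ∀ p ∈ (toWord w).getLast?, ∀ q ∈ (toWord w).head?, NR p q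
  · exact ⟨1, w, by simp, hw, isRed_toWord w, hcyc⟩
  · push_neg at hcyc
    obtain ⟨p, hp, q, hq, hpq⟩ := hcyc
    replace hpq : p.1 = q.1 ∧ p.2 = !q.2 := by tauto
    -- toWord w = q :: M ++ [p]
    rcases hLnil : toWord w with _ | ⟨q', T⟩
    · exact absurd (FreeGroup.toWord_eq_nil_iff.1 hLnil) hw
    rw [hLnil] at hp hq
    have hqq : q = q' := (by simpa using hq : q' = q).symm
    subst hqq
    have hTnil : T ≠ [] := by
      rintro rfl
      simp at hp
      rw [← hp] at hpq
      simp at hpq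
    have hpT : p ∈ T.getLast? := by
      rcases T with _ | ⟨t, T'⟩
      · exact absurd rfl hTnil
      · rwa [List.getLast?_cons_cons] at hp
    have hTlast : T.dropLast ++ [p] = T := List.dropLast_append_getLast? p hpT
    set M := T.dropLast with hM
    have hw_eq : w = FreeGroup.mk [q] * FreeGroup.mk M * (FreeGroup.mk [q])⁻¹ := by
      rw [FreeGroup.inv_mk, FreeGroup.mul_mk, FreeGroup.mul_mk]
      have hinv : FreeGroup.invRev [q] = [p] := by
        simp [FreeGroup.invRev]
        rw [Prod.ext_iff]
        exact ⟨hpq.1.symm, hpq.2.symm⟩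
      rw [hinv, ← FreeGroup.mk_toWord (x := w), hLnil]
      congr 1
      simp [hTlast]
    have hM_ne : FreeGroup.mk M ≠ 1 := by
      intro h1
      rw [h1, mul_one, mul_inv_cancel] at hw_eq
      exact hw hw_eq
    have hM_norm : norm (FreeGroup.mk M) < N := by
      have h1 : norm (FreeGroup.mk M) ≤ M.length := FreeGroup.norm_mk_le
      have h2 : (toWord w).length = N := by rw [← hn]; rfl
      rw [hLnil] at h2
      have h3 : T.length = M.length + 1 := by
        conv_lhs => rw [← hTlast]
        simp
      simp only [List.length_cons, h3] at h2
      omega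
    obtain ⟨g, u, heq, hu1, hu2⟩ := ih _ (by omega) (FreeGroup.mk M) hM_ne rfl
    exact ⟨FreeGroup.mk [q] * g, u, by rw [hw_eq, heq]; group, hu1, hu2⟩

theorem cyclic_reduction' (w : FreeGroup Bool) (hw : w ≠ 1) :
    ∃ (g u : FreeGroup Bool), w = g * u * g⁻¹ ∧ u ≠ 1 ∧
      ∀ n : ℕ, norm (u ^ n) = n * norm u := by
  obtain ⟨g, u, hwu, hu1, hcr⟩ := cyclic_reduction w hw
  refine ⟨g, u, hwu, hu1, fun n => ?_⟩
  have hL : toWord u ≠ [] := fun h => hu1 (FreeGroup.toWord_eq_nil_iff.1 h)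
  have := norm_pow_of_cycRed hL hcr n
  rwa [FreeGroup.mk_toWord] at this


theorem conj_norm_le (g x : FreeGroup Bool) :
    norm (g * x * g⁻¹) ≤ 2 * norm g + norm x := by
  calc norm (g * x * g⁻¹) ≤ norm (g * x) + norm g⁻¹ := FreeGroup.norm_mul_le _ _
    _ ≤ norm g + norm x + norm g⁻¹ := by
        exact Nat.add_le_add_right (FreeGroup.norm_mul_le _ _) _
    _ = 2 * norm g + norm x := by rw [FreeGroup.norm_inv_eq]; ring

theorem le_conj_norm (g x : FreeGroup Bool) :
    norm x ≤ 2 * norm g + norm (g * x * g⁻¹) := by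
  have h := conj_norm_le g⁻¹ (g * x * g⁻¹)
  rw [show g⁻¹ * (g * x * g⁻¹) * g⁻¹⁻¹ = x by group, FreeGroup.norm_inv_eq] at h
  exact h

theorem θ_iter_pow (i n : ℕ) (x : FreeGroup Bool) :
    (⇑θ)^[i] (x ^ n) = ((⇑θ)^[i] x) ^ n := by
  induction i with
  | zero => rfl
  | succ i ih =>
    rw [Function.iterate_succ_apply', Function.iterate_succ_apply', ih, map_pow]

theorem norm_θ_iter (i : ℕ) (x : FreeGroup Bool) :
    norm ((⇑θ)^[i] x) = 2 ^ i * norm x := by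
  induction i with
  | zero => simp
  | succ i ih =>
    rw [Function.iterate_succ_apply', norm_θ, ih, pow_succ]; ring

/-- For the endomorphism `θ` of `F(a,b)` with `θ(a) = ab`, `θ(b) = ba`: if
`w ≠ 1` and `i, j` are positive integers with `θⁱ(w)` conjugate to `wʲ`, then `j = 2ⁱ`. -/
theorem stmt_17 (w : FreeGroup Bool) (hw : w ≠ 1) (i j : ℕ) (hi : 0 < i) (hj : 0 < j)
    (hconj : IsConj ((⇑θ)^[i] w) (w ^ j)) : j = 2 ^ i := by
  obtain ⟨g, hg⟩ := isConj_iff.1 hconj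
  obtain ⟨h, u, hwu, hu1, hupow⟩ := cyclic_reduction' w hw
  set Lu := norm u with hLu
  have hLu1 : 1 ≤ Lu := by
    rw [hLu]
    exact Nat.one_le_iff_ne_zero.2 fun h0 => hu1 (FreeGroup.norm_eq_zero.1 h0)
  set A := 2 ^ i with hA
  set G := norm g with hG
  set H := norm h with hH
  -- θ^[i] w = g⁻¹ * w ^ j * g
  have hθw : (⇑θ)^[i] w = g⁻¹ * w ^ j * g := by
    rw [← hg]; group
  -- w ^ m = h * u ^ m * h⁻¹, norms
  have hwpow : ∀ m : ℕ, w ^ m = h * u ^ m * h⁻¹ := by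
    intro m; rw [hwu, conj_pow]
  have hnorm_w_le : ∀ m : ℕ, norm (w ^ m) ≤ 2 * H + m * Lu := by
    intro m
    rw [hwpow m]
    simpa [hupow m] using conj_norm_le h (u ^ m)
  have hnorm_w_ge : ∀ m : ℕ, m * Lu ≤ 2 * H + norm (w ^ m) := by
    intro m
    have := le_conj_norm h (u ^ m)
    rwa [hupow m, ← hwpow m] at this
  -- main inequalities
  have key : ∀ n : ℕ, A * (n * Lu) ≤ j * n * Lu + (2 * G + 2 * H + A * (2 * H)) ∧
      j * n * Lu ≤ A * (n * Lu) + (2 * G + 2 * H + A * (2 * H)) := by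
    intro n
    have hiter : norm ((⇑θ)^[i] (w ^ n)) = A * norm (w ^ n) := norm_θ_iter i (w ^ n)
    have heq : (⇑θ)^[i] (w ^ n) = g⁻¹ * w ^ (j * n) * g := by
      rw [θ_iter_pow, hθw]
      calc (g⁻¹ * w ^ j * g) ^ n = (g⁻¹ * w ^ j * g⁻¹⁻¹) ^ n := by rw [inv_inv]
        _ = g⁻¹ * (w ^ j) ^ n * g⁻¹⁻¹ := conj_pow
        _ = g⁻¹ * w ^ (j * n) * g := by rw [inv_inv, ← pow_mul]
    have hc1 : norm ((⇑θ)^[i] (w ^ n)) ≤ 2 * G + norm (w ^ (j * n)) := by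
      rw [heq]
      simpa [FreeGroup.norm_inv_eq] using conj_norm_le g⁻¹ (w ^ (j * n))
    have hc2 : norm (w ^ (j * n)) ≤ 2 * G + norm ((⇑θ)^[i] (w ^ n)) := by
      have := le_conj_norm g⁻¹ (w ^ (j * n))
      rwa [inv_inv, ← heq, FreeGroup.norm_inv_eq] at this
    constructor
    · calc A * (n * Lu) ≤ A * (2 * H + norm (w ^ n)) :=
            Nat.mul_le_mul_left _ (hnorm_w_ge n)
        _ = A * norm (w ^ n) + A * (2 * H) := by ring
        _ = norm ((⇑θ)^[i] (w ^ n)) + A * (2 * H) := by rw [hiter]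
        _ ≤ (2 * G + norm (w ^ (j * n))) + A * (2 * H) := Nat.add_le_add_right hc1 _
        _ ≤ (2 * G + (2 * H + j * n * Lu)) + A * (2 * H) := by
            exact Nat.add_le_add_right (Nat.add_le_add_left (hnorm_w_le (j * n)) _) _
        _ = j * n * Lu + (2 * G + 2 * H + A * (2 * H)) := by ring
    · calc j * n * Lu ≤ 2 * H + norm (w ^ (j * n)) := hnorm_w_ge (j * n)
        _ ≤ 2 * H + (2 * G + norm ((⇑θ)^[i] (w ^ n))) := Nat.add_le_add_left hc2 _
        _ = 2 * H + 2 * G + A * norm (w ^ n) := by rw [hiter]; ring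
        _ ≤ 2 * H + 2 * G + A * (2 * H + n * Lu) :=
            Nat.add_le_add_left (Nat.mul_le_mul_left _ (hnorm_w_le n)) _
        _ = A * (n * Lu) + (2 * G + 2 * H + A * (2 * H)) := by ring
  set K := 2 * G + 2 * H + A * (2 * H) with hK
  obtain ⟨k1, k2⟩ := key (K + 1)
  set x := (K + 1) * Lu with hx
  have hxK : K + 1 ≤ x := Nat.le_mul_of_pos_right _ hLu1
  have k1' : A * x ≤ j * x + K := by
    calc A * x ≤ j * (K + 1) * Lu + K := k1
      _ = j * x + K := by rw [hx]; ring
  have k2' : j * x ≤ A * x + K := by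
    calc j * x = j * (K + 1) * Lu := by rw [hx]; ring
      _ ≤ A * x + K := k2
  rcases Nat.lt_trichotomy j A with hlt | heq | hgt
  · exfalso
    have : (j + 1) * x ≤ A * x := Nat.mul_le_mul_right _ hlt
    have h2 : j * x + x ≤ j * x + K := by
      calc j * x + x = (j + 1) * x := by ring
        _ ≤ A * x := this
        _ ≤ j * x + K := k1'
    have := Nat.le_of_add_le_add_left h2
    omega
  · exact heq
  · exfalso
    have : (A + 1) * x ≤ j * x := Nat.mul_le_mul_right _ hgt
    have h2 : A * x + x ≤ A * x + K := by
      calc A * x + x = (A + 1) * x := by ring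
        _ ≤ j * x := this
        _ ≤ A * x + K := k2'
    have := Nat.le_of_add_le_add_left h2
    omega
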